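/- arXiv:0903.4366 — 2 statements merged into one kernel-verified Lean document; each statement's English description precedes it below -/
import Mathlib

section
/- Let P = [a₁/b₁,…,a_k/b_k] be a Fractran program, d = lcm(b₁,…,b_k). For n ∈ {1,…,d}, define a'_n = a_i·(d/b_i) and o_n = n·(a_i/b_i) where a_i/b_i is the first fraction of P such that n·a_i/b_i is an integer (both undefined if no such fraction exists). Let φ(n) denote the unique element of {1,…,d} congruent to n modulo d. Then for every positive integer n on which f_P is defined: f_P(n) = ⌊(n−1)/d⌋ · a'_{φ(n)} + o_{φ(n)}. Moreover, f_P(n) is undefined if and only if a'_{φ(n)} is undefined. -/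
/-- One step of a Fractran program `P` on input `n`: multiply `n` by the first
fraction in the list whose product with `n` is an integer; `none` if no such fraction. -/
def fracStep (P : List ℚ) (n : ℕ) : Option ℕ :=
  ((P.map (fun q => (n : ℚ) * q)).find? (fun x => x.den == 1)).map (fun x => x.num.toNat)

/-- `i`-fold iteration of the partial Fractran step function. -/
def fracIter (P : List ℚ) : ℕ → ℕ → Option ℕ
  | 0, n => some n
  | i + 1, n => (fracStep P n).bind (fracIter P i)

/-- `d`: the least common multiple of the denominators of the program. -/
def fracD (P : List ℚ) : ℕ := (P.map (fun q => q.den)).foldr Nat.lcm 1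

/-- `a'_n = a_i · (d / b_i)` for the first fraction `a_i/b_i` of `P` such that
`n · a_i/b_i` is an integer; `none` if no such fraction exists. -/
def fracA' (P : List ℚ) (n : ℕ) : Option ℕ :=
  (P.find? (fun q => ((n : ℚ) * q).den == 1)).map (fun q => q.num.toNat * (fracD P / q.den))

/-- `o_n = n · a_i/b_i` for the first fraction `a_i/b_i` of `P` such that
`n · a_i/b_i` is an integer; `none` if no such fraction exists. -/
def fracO (P : List ℚ) (n : ℕ) : Option ℕ :=
  (P.find? (fun q => ((n : ℚ) * q).den == 1)).map (fun q => ((n : ℚ) * q).num.toNat)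

/-- `φ(n)`: the unique element of `{1, …, d}` congruent to `n` modulo `d`. -/
def phi (d n : ℕ) : ℕ := (n - 1) % d + 1

lemma qden_mul (q : ℚ) : (q.num:ℚ) = q * q.den := by
  nth_rewrite 2 [← Rat.num_div_den q]
  rw [div_mul_cancel₀]
  exact_mod_cast q.den_nz

lemma den_mul_eq_one_iff (n : ℕ) (q : ℚ) : ((n:ℚ)*q).den = 1 ↔ q.den ∣ n := by
  constructor
  · intro h
    have h2 := Rat.coe_int_num_of_den_eq_one h
    have key : (n:ℤ) * q.num = ((n:ℚ)*q).num * q.den := by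
      have hq := qden_mul q
      have : ((n:ℤ) * q.num : ℚ) = (((n:ℚ)*q).num * q.den : ℚ) := by
        push_cast
        rw [h2]; linear_combination (n:ℚ) * hq
      exact_mod_cast this
    have hdvd : q.den ∣ n * q.num.natAbs := by
      have : (q.den:ℤ) ∣ (n:ℤ) * q.num := ⟨((n:ℚ)*q).num, by linarith⟩
      have := Int.natAbs_dvd_natAbs.mpr this
      simpa [Int.natAbs_mul] using this
    exact (Nat.Coprime.dvd_of_dvd_mul_right (Nat.coprime_comm.mp q.reduced) hdvd)
  · rintro ⟨c, hc⟩
    have : (n:ℚ) * q = ((c * q.num : ℤ) : ℚ) := by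
      subst hc
      push_cast
      linear_combination -(c:ℚ) * (qden_mul q)
    rw [this, Rat.den_intCast]

lemma num_mul_eq (n : ℕ) (q : ℚ) (h : q.den ∣ n) :
    ((n:ℚ)*q).num = (n / q.den : ℕ) * q.num := by
  obtain ⟨c, hc⟩ := h
  have hd : q.den ≠ 0 := q.den_nz
  have hnd : n / q.den = c := by rw [hc]; exact Nat.mul_div_cancel_left c (Nat.pos_of_ne_zero hd)
  have : (n:ℚ) * q = ((c * q.num : ℤ) : ℚ) := by
    subst hc; push_cast; linear_combination -(c:ℚ) * (qden_mul q)
  rw [this, Rat.num_intCast, hnd]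

lemma find?_congr' {α} (l : List α) (p q : α → Bool) (h : ∀ x ∈ l, p x = q x) :
    l.find? p = l.find? q := by
  induction l with
  | nil => rfl
  | cons a t ih =>
    rw [List.find?, List.find?, h a (by simp)]
    cases q a with
    | true => rfl
    | false => exact ih (fun x hx => h x (by simp [hx]))
lemma fracD' (P : List ℚ) : ∀ q, fracD (q :: P) = Nat.lcm q.den (fracD P) := fun _ => rfl

lemma fracD_pos (P : List ℚ) : 0 < fracD P := by
  induction P with
  | nil => simp [fracD]
  | cons q t ih => rw [fracD']; exact Nat.lcm_pos q.pos ih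

lemma den_dvd_fracD (P : List ℚ) (q : ℚ) (h : q ∈ P) : q.den ∣ fracD P := by
  induction P with
  | nil => simp at h
  | cons a t ih =>
    rw [fracD']
    rcases List.mem_cons.mp h with h | h
    · subst h; exact Nat.dvd_lcm_left _ _
    · exact dvd_trans (ih h) (Nat.dvd_lcm_right _ _)

/-- Lemma `lem:pn` of the paper: for every `n > 0`,
`f_P(n) = ⌊(n−1)/d⌋ · a'_{φ(n)} + o_{φ(n)}` when defined, and `f_P(n)` is
undefined iff `a'_{φ(n)}` is undefined. -/
theorem fractran_step_formula (P : List ℚ) (hpos : ∀ q ∈ P, 0 < q) (n : ℕ) (hn : 0 < n) :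
    fracStep P n =
      (fracA' P (phi (fracD P) n)).bind (fun a =>
        (fracO P (phi (fracD P) n)).map (fun o => (n - 1) / fracD P * a + o)) ∧
    (fracStep P n = none ↔ fracA' P (phi (fracD P) n) = none) := by
  set d := fracD P with hd
  set m := phi d n with hm
  set k := (n - 1) / d with hk
  have hd0 : 0 < d := fracD_pos P
  have hkm : n = k * d + m := by
    have h1 := Nat.div_add_mod (n - 1) d
    show n = (n - 1) / d * d + ((n - 1) % d + 1)
    rw [Nat.mul_comm]
    omega
  have hpred : ∀ q ∈ P, (((n:ℚ)*q).den == 1) = (((m:ℚ)*q).den == 1) := by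
    intro q hq
    rw [Bool.eq_iff_iff, beq_iff_eq, beq_iff_eq, den_mul_eq_one_iff, den_mul_eq_one_iff, hkm]
    exact Nat.dvd_add_right ((den_dvd_fracD P q hq).mul_left k)
  have hstep : fracStep P n =
      (P.find? (fun q => ((m:ℚ)*q).den == 1)).map (fun q => ((n:ℚ)*q).num.toNat) := by
    rw [fracStep, List.find?_map, Option.map_map]
    congr 1
    exact find?_congr' P _ _ hpred
  rw [hstep, fracA', fracO, ← hd]
  cases hfind : P.find? (fun q => ((m:ℚ)*q).den == 1) with
  | none => simp
  | some q =>
    have hmem := List.mem_of_find?_eq_some hfind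
    have hdvdm : q.den ∣ m := (den_mul_eq_one_iff m q).mp (by simpa using List.find?_some hfind)
    have hdvdd : q.den ∣ d := den_dvd_fracD P q hmem
    have hdvdn : q.den ∣ n := by rw [hkm]; exact Dvd.dvd.add (hdvdd.mul_left k) hdvdm
    simp only [Option.map_some, Option.bind_some]
    constructor
    · congr 1
      -- main arithmetic identity
      have hnum := num_mul_eq n q hdvdn
      have hnum' := num_mul_eq m q hdvdm
      have hq0 : 0 < q.num := Rat.num_pos.mpr (hpos q hmem)
      have hqt : q.num = (q.num.toNat : ℤ) := (Int.toNat_of_nonneg hq0.le).symm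
      rw [hnum, hnum', hqt]
      rw [← Nat.cast_mul, ← Nat.cast_mul, Int.toNat_natCast, Int.toNat_natCast]
      -- now a nat goal
      obtain ⟨d', hd'⟩ := hdvdd
      obtain ⟨m', hm'⟩ := hdvdm
      have hb0 : 0 < q.den := q.pos
      have h1 : n / q.den = k * d' + m' := by
        rw [hkm, hd', hm', ← Nat.mul_assoc, Nat.mul_comm k q.den, Nat.mul_assoc,
          ← Nat.mul_add, Nat.mul_div_cancel_left _ hb0]
      have h2 : m / q.den = m' := by rw [hm', Nat.mul_div_cancel_left _ hb0]
      have h3 : d / q.den = d' := by rw [hd', Nat.mul_div_cancel_left _ hb0]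
      rw [h1, h2, h3]
      simp only [Int.toNat_natCast]
      ring
    · simp
end

section
/- Binary doubling via Fractran-style exponent manipulation: for any natural numbers L and R, repeatedly applying the rewrite 'replace a factor r² by r'' (i.e., r^{2k+b} ↦ r'^{k} with remainder bit b) and 'replace a factor l by l'²' transforms l^L · r^R into l'^{2L} · r^{⌊R/2⌋} · (auxiliary bit information), and these processes terminate: the rules dividing an exponent by 2 or transferring an exponent can only be applied finitely often in sequence. -/
private lemma fractran_no_inf (p q : ℕ) (hp : p.Prime) (hq : q.Prime) (hpq : p ≠ q)
    (k e : ℕ) (hk : 0 < k) :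
    ¬ ∃ g : ℕ → ℕ, (∀ i, 0 < g i) ∧
        ∀ i, p ^ k ∣ g i ∧ g (i + 1) * p ^ k = g i * q ^ e := by
  rintro ⟨g, hpos, hstep⟩
  set f : ℕ → ℕ := fun i => (g i).factorization p with hf
  have hkey : ∀ i, f (i + 1) + k = f i := by
    intro i
    obtain ⟨hdvd, heq⟩ := hstep i
    have h1 := congrArg (fun n => n.factorization p) heq
    simp only [Nat.factorization_mul (hpos _).ne' (pow_ne_zero _ hp.pos.ne'),
      Nat.factorization_mul (hpos _).ne' (pow_ne_zero _ hq.pos.ne'),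
      Nat.factorization_pow, Finsupp.add_apply, Finsupp.smul_apply,
      hp.factorization, hq.factorization, Finsupp.single_apply] at h1
    simp only [if_pos rfl, if_neg (Ne.symm hpq), smul_eq_mul, mul_one, mul_zero,
      add_zero] at h1
    simpa [hf] using h1
  have hge : ∀ i, k ≤ f i := fun i =>
    (Nat.Prime.pow_dvd_iff_le_factorization hp (hpos i).ne').mp (hstep i).1
  have hsum : ∀ n, f n + n * k = f 0 := by
    intro n
    induction n with
    | zero => simp
    | succ m ih =>
        have h1 := hkey m
        have h2 : (m + 1) * k = m * k + k := by ring
        rw [h2]; linarith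
  nlinarith [hsum (f 0 + 1), hge (f 0 + 1)]

/-- Binary doubling/halving via Fractran-style exponent manipulation on numbers
viewed as multisets of prime factors. For pairwise distinct primes
`p₁, p₂, q₁, q₂`, consider the rewrite rules "replace a factor `p₁` by `q₁²`"
(doubling the transferred exponent) and "replace a factor `p₂²` by `q₂`"
(halving, leaving a remainder bit). Then:
* `p₁^L · p₂^R` rewrites in finitely many steps to
  `q₁^(2L) · q₂^⌊R/2⌋ · p₂^(R mod 2)` (the auxiliary bit information), and
* each of the two rules can only be applied finitely often in sequence
  (on positive numbers), i.e. the processes terminate. -/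
theorem fractran_exponent_doubling (p1 p2 q1 q2 : ℕ)
    (hp1 : p1.Prime) (hp2 : p2.Prime) (hq1 : q1.Prime) (hq2 : q2.Prime)
    (hdist : [p1, p2, q1, q2].Pairwise (· ≠ ·)) :
    (∀ L R : ℕ,
      Relation.ReflTransGen
        (fun a b => (p1 ∣ a ∧ b * p1 = a * q1 ^ 2) ∨ (p2 ^ 2 ∣ a ∧ b * p2 ^ 2 = a * q2))
        (p1 ^ L * p2 ^ R) (q1 ^ (2 * L) * q2 ^ (R / 2) * p2 ^ (R % 2))) ∧
    (¬ ∃ g : ℕ → ℕ, (∀ i, 0 < g i) ∧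
        ∀ i, p1 ∣ g i ∧ g (i + 1) * p1 = g i * q1 ^ 2) ∧
    (¬ ∃ g : ℕ → ℕ, (∀ i, 0 < g i) ∧
        ∀ i, p2 ^ 2 ∣ g i ∧ g (i + 1) * p2 ^ 2 = g i * q2) := by
  simp only [List.pairwise_cons] at hdist
  have h1q1 : p1 ≠ q1 := hdist.1 q1 (by simp)
  have h2q2 : p2 ≠ q2 := hdist.2.1 q2 (by simp)
  set Rel : ℕ → ℕ → Prop :=
    fun a b => (p1 ∣ a ∧ b * p1 = a * q1 ^ 2) ∨ (p2 ^ 2 ∣ a ∧ b * p2 ^ 2 = a * q2) with hRel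
  refine ⟨?_, ?_, ?_⟩
  · -- reachability
    have step1 : ∀ L c : ℕ, Relation.ReflTransGen Rel (c * p1 ^ L) (c * q1 ^ (2 * L)) := by
      intro L
      induction L with
      | zero => intro c; simpa using Relation.ReflTransGen.refl
      | succ m ih =>
        intro c
        refine Relation.ReflTransGen.head (b := c * q1 ^ 2 * p1 ^ m) ?_ ?_
        · left
          refine ⟨Dvd.dvd.mul_left (dvd_pow_self p1 (Nat.succ_ne_zero m)) _, by ring⟩
        · have := ih (c * q1 ^ 2)
          have heq : c * q1 ^ 2 * q1 ^ (2 * m) = c * q1 ^ (2 * (m + 1)) := by ring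
          rwa [heq] at this
    have step2 : ∀ R c : ℕ, Relation.ReflTransGen Rel (c * p2 ^ R)
        (c * q2 ^ (R / 2) * p2 ^ (R % 2)) := by
      intro R
      induction R using Nat.strong_induction_on with
      | _ R ih =>
        intro c
        rcases Nat.lt_or_ge R 2 with hR | hR
        · interval_cases R <;> simpa using Relation.ReflTransGen.refl
        · refine Relation.ReflTransGen.head (b := c * q2 * p2 ^ (R - 2)) ?_ ?_
          · right
            constructor
            · have : p2 ^ 2 ∣ p2 ^ R := pow_dvd_pow p2 hR
              exact this.mul_left c
            · have : c * q2 * p2 ^ (R - 2) * p2 ^ 2 = c * p2 ^ (R - 2 + 2) * q2 := by ring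
              rw [this, Nat.sub_add_cancel hR]
          · have h := ih (R - 2) (by omega) (c * q2)
            have h1 : (R - 2) / 2 + 1 = R / 2 := by omega
            have h2 : (R - 2) % 2 = R % 2 := by omega
            have heq : c * q2 * q2 ^ ((R - 2) / 2) = c * q2 ^ (R / 2) := by
              rw [← h1, pow_succ]; ring
            rwa [heq, h2] at h
    intro L R
    have A : Relation.ReflTransGen Rel (p1 ^ L * p2 ^ R) (q1 ^ (2 * L) * p2 ^ R) := by
      have := step1 L (p2 ^ R)
      rwa [mul_comm (p2 ^ R) (p1 ^ L), mul_comm (p2 ^ R) (q1 ^ (2 * L))] at this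
    exact A.trans (step2 R (q1 ^ (2 * L)))
  · exact fun ⟨g, h1, h2⟩ => fractran_no_inf p1 q1 hp1 hq1 h1q1 1 2 one_pos
      ⟨g, h1, fun i => by simpa using h2 i⟩
  · exact fun ⟨g, h1, h2⟩ => fractran_no_inf p2 q2 hp2 hq2 h2q2 2 1 two_pos
      ⟨g, h1, fun i => by simpa using h2 i⟩
end
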